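/- Let G be a finite simple graph and H a subgraph of G that is contractible in itself. Let G' be the graph obtained from G by adding a new vertex x joined to exactly the vertices of H (pyramid extension over H). Then χ(G') = χ(G). -/

import Mathlib

noncomputable def cfilter {V : Type*} (p : V → Prop) (s : Finset V) : Finset V :=
  @Finset.filter _ p (Classical.decPred p) s

lemma cfilter_card_lt {V : Type*} {p : V → Prop} {s : Finset V} {x : V} (hx : x ∈ s)
    (hpx : ¬ p x) : (cfilter p s).card < s.card := by
  classical
  refine Finset.card_lt_card ?_
  unfold cfilter
  rw [Finset.filter_congr_decidable]
  exact (Finset.ssubset_iff_of_subset (Finset.filter_subset _ _)).mpr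
    ⟨x, hx, fun h => hpx (Finset.mem_filter.mp h).2⟩

/-- Ivashchenko contractibility (in itself) of the subgraph of `G` induced on the finite
vertex set `s`: either `s` is a single vertex, or there is an injective function `f` on `s`
such that for every non-minimal vertex `x` the down-sphere `S⁻_f(x)` (the neighbours of `x`
in `s` with smaller `f`-value) is contractible in itself. -/
def Contractible {V : Type*} (G : SimpleGraph V) (s : Finset V) : Prop :=
  s.card = 1 ∨ (1 < s.card ∧ ∃ f : V → ℝ, Set.InjOn f ↑s ∧
    ∀ x ∈ s, (∃ y ∈ s, f y < f x) →
      Contractible G (cfilter (fun y => G.Adj x y ∧ f y < f x) s))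
termination_by s.card
decreasing_by
  rename_i hx hlt
  exact cfilter_card_lt hx (fun h => G.loopless.irrefl x h.1)

/-- Euler characteristic of the subgraph of `G` induced on the finite vertex set `s`:
the alternating sum `Σ_k (-1)^k v_k`, where `v_k` is the number of `(k+1)`-cliques of `G`
contained in `s`. -/
noncomputable def echar {V : Type*} (G : SimpleGraph V) (s : Finset V) : ℤ :=
  ∑ k ∈ Finset.range (s.card + 1),
    (-1 : ℤ) ^ k *
      (Nat.card {t : Finset V // t ⊆ s ∧ t.card = k + 1 ∧ G.IsClique (t : Set V)} : ℤ)


lemma mem_cfilter {V : Type*} {p : V → Prop} {s : Finset V} {x : V} :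
    x ∈ cfilter p s ↔ x ∈ s ∧ p x := by
  classical
  unfold cfilter
  rw [Finset.filter_congr_decidable, Finset.mem_filter]

lemma cfilter_subset {V : Type*} (p : V → Prop) (s : Finset V) : cfilter p s ⊆ s :=
  fun _ h => (mem_cfilter.mp h).1

/-- clique count -/
noncomputable def cN {V : Type*} (G : SimpleGraph V) (s : Finset V) (k : ℕ) : ℕ :=
  (cfilter (fun t => G.IsClique ((t : Finset V) : Set V)) (s.powersetCard k)).card

lemma natCard_eq_cN {V : Type*} (G : SimpleGraph V) (s : Finset V) (k : ℕ) :
    (Nat.card {t : Finset V // t ⊆ s ∧ t.card = k ∧ G.IsClique (t : Set V)} : ℤ) = cN G s k := by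
  classical
  have e : {t : Finset V // t ⊆ s ∧ t.card = k ∧ G.IsClique (t : Set V)} ≃
      {t // t ∈ cfilter (fun t => G.IsClique ((t : Finset V) : Set V)) (s.powersetCard k)} := by
    refine Equiv.subtypeEquivRight fun t => ?_
    rw [mem_cfilter, Finset.mem_powersetCard, and_assoc]
  rw [Nat.card_congr e, Nat.card_eq_finsetCard, cN]

lemma cN_zero {V : Type*} (G : SimpleGraph V) (s : Finset V) : cN G s 0 = 1 := by
  unfold cN
  rw [Finset.powersetCard_zero]
  have : cfilter (fun t => G.IsClique ((t : Finset V) : Set V)) {∅} = {∅} := by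
    ext t
    simp [mem_cfilter]
    rintro rfl
    simp [SimpleGraph.IsClique]
  rw [this, Finset.card_singleton]

lemma cN_eq_zero {V : Type*} (G : SimpleGraph V) {s : Finset V} {k : ℕ} (h : s.card < k) :
    cN G s k = 0 := by
  unfold cN
  rw [Finset.powersetCard_eq_empty.mpr h]
  simp [cfilter]

lemma echar_eq_sum {V : Type*} (G : SimpleGraph V) (s : Finset V) :
    echar G s = ∑ k ∈ Finset.range (s.card + 1), (-1 : ℤ) ^ k * (cN G s (k + 1) : ℤ) := by
  unfold echar
  exact Finset.sum_congr rfl fun k _ => by rw [natCard_eq_cN]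

lemma echar_eq_sum' {V : Type*} (G : SimpleGraph V) (s : Finset V) {M : ℕ} (hM : s.card ≤ M) :
    echar G s = ∑ k ∈ Finset.range (M + 1), (-1 : ℤ) ^ k * (cN G s (k + 1) : ℤ) := by
  rw [echar_eq_sum]
  refine Finset.sum_subset ?_ ?_
  · exact Finset.range_subset_range.mpr (by omega)
  · intro k _ hk
    rw [Finset.mem_range, not_lt] at hk
    rw [cN_eq_zero G (by omega)]
    simp

lemma cN_insert {V : Type*} [DecidableEq V] (G : SimpleGraph V) {s : Finset V} {x : V} (hx : x ∉ s) (k : ℕ) :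
    cN G (insert x s) (k + 1) = cN G s (k + 1) + cN G (cfilter (G.Adj x) s) k := by
  classical
  have key : ∀ u : Finset V, u ⊆ insert x s →
      (fun t => G.IsClique ((t : Finset V) : Set V)) u → x ∈ u →
      u.erase x ∈ cfilter (fun t => G.IsClique ((t : Finset V) : Set V))
        ((cfilter (G.Adj x) s).powersetCard ((u.card) - 1)) := by
    intro u hsub hcl hxu
    rw [mem_cfilter, Finset.mem_powersetCard]
    refine ⟨⟨?_, Finset.card_erase_of_mem hxu⟩, hcl.subset (by simp [Finset.erase_subset])⟩
    intro y hy
    have hyne : y ≠ x := Finset.ne_of_mem_erase hy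
    have hyu : y ∈ u := Finset.mem_of_mem_erase hy
    have hys : y ∈ s := by
      rcases Finset.mem_insert.mp (hsub hyu) with h | h
      · exact absurd h hyne
      · exact h
    rw [mem_cfilter]
    exact ⟨hys, hcl hxu hyu (Ne.symm hyne)⟩
  unfold cN
  set p : Finset V → Prop := fun t => G.IsClique ((t : Finset V) : Set V) with hp
  set F := cfilter p ((insert x s).powersetCard (k + 1)) with hF
  rw [← Finset.card_filter_add_card_filter_not (s := F) (fun t => x ∈ t)]
  have h2 : F.filter (fun t => ¬ x ∈ t) = cfilter p (s.powersetCard (k + 1)) := by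
    ext t
    rw [Finset.mem_filter, hF, mem_cfilter, mem_cfilter, Finset.mem_powersetCard,
      Finset.mem_powersetCard]
    constructor
    · rintro ⟨⟨⟨hsub, hc⟩, hp⟩, hxt⟩
      exact ⟨⟨(Finset.subset_insert_iff_of_notMem hxt).mp hsub, hc⟩, hp⟩
    · rintro ⟨⟨hsub, hc⟩, hp⟩
      exact ⟨⟨⟨hsub.trans (Finset.subset_insert x s), hc⟩, hp⟩, fun hxt => hx (hsub hxt)⟩
  have h1 : (F.filter (fun t => x ∈ t)).card =
      (cfilter p ((cfilter (G.Adj x) s).powersetCard k)).card := by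
    refine Finset.card_bij' (fun t _ => t.erase x) (fun u _ => insert x u) ?_ ?_ ?_ ?_
    · intro t ht
      rw [Finset.mem_filter, hF, mem_cfilter, Finset.mem_powersetCard] at ht
      have := key t ht.1.1.1 ht.1.2 ht.2
      rwa [ht.1.1.2] at this
    · intro u hu
      rw [mem_cfilter, Finset.mem_powersetCard] at hu
      have hxu : x ∉ u := fun h => hx (cfilter_subset _ _ (hu.1.1 h))
      rw [Finset.mem_filter, hF, mem_cfilter, Finset.mem_powersetCard]
      refine ⟨⟨⟨?_, ?_⟩, ?_⟩, Finset.mem_insert_self x u⟩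
      · exact Finset.insert_subset (Finset.mem_insert_self x s)
          (fun y hy => Finset.mem_insert_of_mem (cfilter_subset _ _ (hu.1.1 hy)))
      · rw [Finset.card_insert_of_notMem hxu, hu.1.2]
      · show G.IsClique ((insert x u : Finset V) : Set V)
        rw [Finset.coe_insert, SimpleGraph.isClique_insert]
        exact ⟨hu.2, fun y hy _ => (mem_cfilter.mp (hu.1.1 hy)).2⟩
    · intro t ht
      rw [Finset.mem_filter] at ht
      exact Finset.insert_erase ht.2
    · intro u hu
      rw [mem_cfilter, Finset.mem_powersetCard] at hu
      exact Finset.erase_insert (fun h => hx (cfilter_subset _ _ (hu.1.1 h)))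
  rw [h1, h2]
  ring

lemma echar_insert {V : Type*} [DecidableEq V] (G : SimpleGraph V) {s : Finset V} {x : V}
    (hx : x ∉ s) :
    echar G (insert x s) = echar G s + 1 - echar G (cfilter (G.Adj x) s) := by
  set N := cfilter (G.Adj x) s with hN
  have hNle : N.card ≤ s.card := Finset.card_le_card (cfilter_subset _ _)
  have hcard : (insert x s).card = s.card + 1 := Finset.card_insert_of_notMem hx
  rw [echar_eq_sum, hcard]
  have hsplit : ∑ k ∈ Finset.range (s.card + 1 + 1), (-1:ℤ)^k * (cN G (insert x s) (k+1) : ℤ)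
      = ∑ k ∈ Finset.range (s.card + 2), ((-1:ℤ)^k * (cN G s (k+1) : ℤ)
          + (-1:ℤ)^k * (cN G N k : ℤ)) := by
    refine Finset.sum_congr rfl fun k _ => ?_
    rw [cN_insert G hx k]
    push_cast
    ring
  rw [hsplit, Finset.sum_add_distrib]
  have h1 : ∑ k ∈ Finset.range (s.card + 2), (-1:ℤ)^k * (cN G s (k+1) : ℤ) = echar G s :=
    (echar_eq_sum' G s (by omega)).symm
  have h2 : ∑ k ∈ Finset.range (s.card + 2), (-1:ℤ)^k * (cN G N k : ℤ)
      = 1 - echar G N := by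
    rw [Finset.sum_range_succ' (fun k => (-1:ℤ)^k * (cN G N k : ℤ)) (s.card + 1)]
    have h3 : ∑ k ∈ Finset.range (s.card + 1), (-1:ℤ)^(k+1) * (cN G N (k+1) : ℤ)
        = -∑ k ∈ Finset.range (s.card + 1), (-1:ℤ)^k * (cN G N (k+1) : ℤ) := by
      rw [← Finset.sum_neg_distrib]
      exact Finset.sum_congr rfl fun k _ => by ring
    rw [h3, ← echar_eq_sum' G N hNle, cN_zero]
    push_cast
    ring
  rw [h1, h2]
  ring

lemma cfilter_empty {V : Type*} (p : V → Prop) : cfilter p (∅ : Finset V) = ∅ := by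
  classical
  unfold cfilter
  rw [Finset.filter_congr_decidable, Finset.filter_empty]

lemma echar_empty {V : Type*} (G : SimpleGraph V) : echar G (∅ : Finset V) = 0 := by
  rw [echar_eq_sum]
  simp [cN_eq_zero G (show (∅ : Finset V).card < 1 by simp)]

lemma echar_card_one {V : Type*} (G : SimpleGraph V) {s : Finset V} (h : s.card = 1) :
    echar G s = 1 := by
  classical
  obtain ⟨a, rfl⟩ := Finset.card_eq_one.mp h
  have h0 : ({a} : Finset V) = insert a (∅ : Finset V) := by simp
  rw [h0, echar_insert G (Finset.notMem_empty a), cfilter_empty, echar_empty]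
  ring

lemma contractible_echar {V : Type*} (G : SimpleGraph V) (s : Finset V)
    (hs : Contractible G s) : echar G s = 1 := by
  classical
  rw [Contractible] at hs
  rcases hs with h1 | ⟨hlt, f, hinj, hdown⟩
  · exact echar_card_one G h1
  · obtain ⟨x, hx, hmax⟩ := Finset.exists_max_image s f (Finset.card_pos.mp (by omega))
    have hstrict : ∀ y ∈ s, y ≠ x → f y < f x := fun y hy hne =>
      lt_of_le_of_ne (hmax y hy)
        (fun h => hne (hinj (Finset.mem_coe.mpr hy) (Finset.mem_coe.mpr hx) h))
    obtain ⟨y0, hy0, hy0ne⟩ := Finset.exists_mem_ne hlt x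
    have hNcon : Contractible G (cfilter (fun y => G.Adj x y ∧ f y < f x) s) :=
      hdown x hx ⟨y0, hy0, hstrict y0 hy0 hy0ne⟩
    have hNe : echar G (cfilter (fun y => G.Adj x y ∧ f y < f x) s) = 1 :=
      contractible_echar G _ hNcon
    have hNeq : cfilter (fun y => G.Adj x y ∧ f y < f x) s
        = cfilter (G.Adj x) (s.erase x) := by
      ext z
      rw [mem_cfilter, mem_cfilter, Finset.mem_erase]
      constructor
      · rintro ⟨hz, hadj, hlt'⟩
        exact ⟨⟨fun h => by subst h; exact G.loopless.irrefl z hadj, hz⟩, hadj⟩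
      · rintro ⟨⟨hneq, hz⟩, hadj⟩
        exact ⟨hz, hadj, hstrict z hz hneq⟩
    have herase : Contractible G (s.erase x) := by
      rw [Contractible]
      rcases eq_or_lt_of_le (show 1 ≤ (s.erase x).card by
          rw [Finset.card_erase_of_mem hx]; omega) with he | he
      · exact Or.inl he.symm
      · refine Or.inr ⟨he, f, hinj.mono (by simp [Finset.erase_subset]), ?_⟩
        intro y hy hexists
        have hys : y ∈ s := Finset.mem_of_mem_erase hy
        have hyne : y ≠ x := Finset.ne_of_mem_erase hy
        obtain ⟨z, hz, hzlt⟩ := hexists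
        have heq2 : cfilter (fun w => G.Adj y w ∧ f w < f y) (s.erase x)
            = cfilter (fun w => G.Adj y w ∧ f w < f y) s := by
          ext w
          rw [mem_cfilter, mem_cfilter, Finset.mem_erase]
          constructor
          · rintro ⟨⟨_, hw⟩, hp⟩
            exact ⟨hw, hp⟩
          · rintro ⟨hw, hp⟩
            refine ⟨⟨fun h => ?_, hw⟩, hp⟩
            subst h
            exact absurd hp.2 (not_lt.mpr (hstrict y hys hyne).le)
        rw [heq2]
        exact hdown y hys ⟨z, Finset.mem_of_mem_erase hz, hzlt⟩
    have hEe : echar G (s.erase x) = 1 := contractible_echar G (s.erase x) herase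
    have hins : echar G s = echar G (s.erase x) + 1 - echar G (cfilter (G.Adj x) (s.erase x)) := by
      conv_lhs => rw [← Finset.insert_erase hx]
      exact echar_insert G (Finset.notMem_erase x s)
    rw [hins, hEe, ← hNeq, hNe]
    ring
termination_by s.card
decreasing_by
  · exact cfilter_card_lt hx (fun h => G.loopless.irrefl x h.1)
  · classical
    rw [Finset.card_erase_of_mem hx]
    have := Finset.card_pos.mpr ⟨x, hx⟩
    omega

/-- The pyramid extension (cone) of `G` over the vertex set `s`: a new vertex (`none`) is
joined to exactly the vertices of `s`. -/
def coneOver {V : Type*} (G : SimpleGraph V) (s : Set V) : SimpleGraph (Option V) where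
  Adj a b :=
    match a, b with
    | some x, some y => G.Adj x y
    | some x, none => x ∈ s
    | none, some y => y ∈ s
    | none, none => False
  symm := by
    refine ⟨?_⟩
    rintro (_ | x) (_ | y) h <;> simp_all <;> exact h.symm
  loopless := by
    refine ⟨?_⟩
    rintro (_ | x) h
    · exact h
    · exact G.loopless.irrefl x h

lemma isClique_image_some {V : Type*} [DecidableEq V] (G : SimpleGraph V) (s : Set V) (u : Finset V) :
    (coneOver G s).IsClique ((u.image some : Finset (Option V)) : Set (Option V)) ↔
      G.IsClique ((u : Finset V) : Set V) := by
  rw [Finset.coe_image]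
  constructor
  · intro h a ha b hb hab
    exact h (Set.mem_image_of_mem some ha) (Set.mem_image_of_mem some hb)
      (fun hh => hab (Option.some_injective V hh))
  · intro h a ha b hb hab
    obtain ⟨a', ha', rfl⟩ := ha
    obtain ⟨b', hb', rfl⟩ := hb
    exact h ha' hb' (fun hh => hab (by rw [hh]))

lemma cN_image_some {V : Type*} [DecidableEq V] (G : SimpleGraph V) (s : Set V) (t : Finset V) (k : ℕ) :
    cN (coneOver G s) (t.image some) k = cN G t k := by
  classical
  unfold cN
  symm
  refine Finset.card_bij (fun u _ => u.image some) ?_ ?_ ?_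
  · intro u hu
    rw [mem_cfilter, Finset.mem_powersetCard] at hu ⊢
    exact ⟨⟨Finset.image_subset_image hu.1.1,
      by rw [Finset.card_image_of_injective _ (Option.some_injective V), hu.1.2]⟩,
      (isClique_image_some G s u).mpr hu.2⟩
  · intro u1 h1 u2 h2 he
    exact Finset.image_injective (Option.some_injective V) he
  · intro v hv
    rw [mem_cfilter, Finset.mem_powersetCard] at hv
    obtain ⟨u, hu, rfl⟩ := Finset.subset_image_iff.mp hv.1.1
    refine ⟨u, ?_, rfl⟩
    rw [mem_cfilter, Finset.mem_powersetCard]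
    refine ⟨⟨hu, ?_⟩, (isClique_image_some G s u).mp hv.2⟩
    rw [← hv.1.2, Finset.card_image_of_injective _ (Option.some_injective V)]

lemma echar_image_some {V : Type*} [DecidableEq V] (G : SimpleGraph V) (s : Set V) (t : Finset V) :
    echar (coneOver G s) (t.image some) = echar G t := by
  rw [echar_eq_sum, echar_eq_sum, Finset.card_image_of_injective _ (Option.some_injective V)]
  exact Finset.sum_congr rfl fun k _ => by rw [cN_image_some]

/-- If `H` (induced on the vertex set `s`) is a contractible-in-itself
subgraph of `G`, then the pyramid extension of `G` over `H` has the same Euler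
characteristic as `G`. -/
theorem euler_pyramid_extension {V : Type*} [Fintype V] (G : SimpleGraph V) (s : Finset V)
    (hs : Contractible G s) :
    echar (coneOver G (s : Set V)) Finset.univ = echar G Finset.univ := by
  classical
  have huniv : (Finset.univ : Finset (Option V)) = insert none (Finset.univ.image some) := by
    ext o
    cases o <;> simp
  have hnone : (none : Option V) ∉ Finset.univ.image some := by simp
  have hfil : cfilter ((coneOver G (s : Set V)).Adj none) ((Finset.univ : Finset V).image some)
      = s.image some := by
    ext o
    rw [mem_cfilter]
    cases o with
    | none =>
      simp only [Finset.mem_image]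
      constructor
      · rintro ⟨_, h2⟩
        exact absurd h2 ((coneOver G (s : Set V)).loopless.irrefl none)
      · rintro ⟨a, _, h⟩
        exact absurd h (by simp)
    | some a =>
      constructor
      · rintro ⟨_, h2⟩
        exact Finset.mem_image_of_mem some (by exact_mod_cast h2)
      · intro h
        obtain ⟨a', ha', he⟩ := Finset.mem_image.mp h
        cases Option.some_injective V he
        exact ⟨Finset.mem_image_of_mem some (Finset.mem_univ _), by exact_mod_cast ha'⟩
  rw [huniv, echar_insert _ hnone, hfil, echar_image_some, echar_image_some,
    contractible_echar G s hs]
  ring
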